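/- Let B = [B_F B_C] be an oriented incidence matrix of a graph on n vertices with a spanning-forest decomposition, cut-set matrix R, and diagonal real weight matrix W (whose entries may be negative), and let c be the dimension of the null space of Bᵀ. Let L_e(F)^{1/2} denote the positive-definite square root of L_e(F) = B_Fᵀ·B_F. Then the real symmetric matrices L = B·W·Bᵀ, R·W·Rᵀ, and L_e(F)^{1/2}·R·W·Rᵀ·L_e(F)^{1/2} satisfy: the number of positive eigenvalues (counted with multiplicity) of L equals that of R·W·Rᵀ and that of L_e(F)^{1/2}·R·W·Rᵀ·L_e(F)^{1/2}; the same holds for the number of negative eigenvalues; and the multiplicity of the eigenvalue 0 of L equals the multiplicity of the eigenvalue 0 of R·W·Rᵀ plus c. -/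

import Mathlib

open Matrix

/-- `B` is an oriented incidence matrix: every column has exactly one `1`,
exactly one `-1`, and zeros elsewhere. -/
def IsIncidenceMatrix {V E : Type*} (B : Matrix V E ℝ) : Prop :=
  ∀ e : E, ∃ i j : V, i ≠ j ∧ B i e = 1 ∧ B j e = -1 ∧
    ∀ k : V, k ≠ i → k ≠ j → B k e = 0

/-- The square root of a positive semidefinite matrix, as defined in the older Mathlib
(`Matrix.PosSemidef.sqrt`, since removed). -/
noncomputable def Matrix.PosSemidef.sqrt {n 𝕜 : Type*} [Fintype n] [RCLike 𝕜] [PartialOrder 𝕜] [DecidableEq n]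
    {A : Matrix n n 𝕜} (hA : A.PosSemidef) : Matrix n n 𝕜 :=
  (hA.1.eigenvectorUnitary : Matrix n n 𝕜) * diagonal ((↑) ∘ (√·) ∘ hA.1.eigenvalues) *
    (star hA.1.eigenvectorUnitary : Matrix n n 𝕜)

section Helpers

variable {m n : Type*} [Fintype m] [Fintype n]

/-- Extension by zero outside a predicate, as a linear map. -/
private noncomputable def extZero (P : m → Prop) [DecidablePred P] :
    ({j // P j} → ℝ) →ₗ[ℝ] (m → ℝ) where
  toFun x j := if h : P j then x ⟨j, h⟩ else 0
  map_add' x y := by funext j; by_cases h : P j <;> simp [h]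
  map_smul' c x := by funext j; by_cases h : P j <;> simp [h]

private lemma diag_card_le (d : m → ℝ) (e : n → ℝ) (φ : (m → ℝ) →ₗ[ℝ] (n → ℝ))
    (hq : ∀ x : m → ℝ, ∑ i, e i * (φ x i) ^ 2 = ∑ j, d j * (x j) ^ 2) :
    (Finset.univ.filter fun j => 0 < d j).card ≤ (Finset.univ.filter fun i => 0 < e i).card := by
  rw [← Fintype.card_subtype, ← Fintype.card_subtype]
  set Φ : ({j // 0 < d j} → ℝ) →ₗ[ℝ] ({i // 0 < e i} → ℝ) :=
    (LinearMap.funLeft ℝ ℝ Subtype.val).comp (φ.comp (extZero (fun j => 0 < d j))) with hΦdef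
  have hinj : Function.Injective Φ := by
    rw [← LinearMap.ker_eq_bot, LinearMap.ker_eq_bot']
    intro x hx
    by_contra hx0
    obtain ⟨j0, hj0⟩ : ∃ j0, x j0 ≠ 0 := by
      by_contra h; push_neg at h; exact hx0 (funext h)
    set y := extZero (fun j => 0 < d j) x with hy
    have hypos : 0 < ∑ j, d j * (y j) ^ 2 := by
      apply Finset.sum_pos'
      · intro j _
        by_cases h : 0 < d j
        · have hyj : y j = x ⟨j, h⟩ := by simp [hy, extZero, h]
          rw [hyj]
          exact mul_nonneg h.le (sq_nonneg _)
        · have hyj : y j = 0 := by simp [hy, extZero, h]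
          simp [hyj]
      · refine ⟨j0.1, Finset.mem_univ _, ?_⟩
        have hyj : y j0.1 = x j0 := by simp [hy, extZero, j0.2]
        rw [hyj]
        exact mul_pos j0.2 (pow_pos (abs_pos.mpr hj0) 2 |> fun _ => by positivity)
    have hneg : ∑ i, e i * (φ y i) ^ 2 ≤ 0 := by
      apply Finset.sum_nonpos
      intro i _
      by_cases h : 0 < e i
      · have hφ0 : φ y i = 0 := by
          have := congrFun hx ⟨i, h⟩
          simpa [hΦdef, LinearMap.funLeft, hy] using this
        simp [hφ0]
      · exact mul_nonpos_iff.2 (Or.inr ⟨le_of_not_gt h, sq_nonneg _⟩)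
    rw [hq y] at hneg
    exact absurd hypos (not_lt.2 hneg)
  have h := LinearMap.finrank_le_finrank_of_injective hinj
  simpa [Module.finrank_fintype_fun_eq_card] using h


private lemma psd_sqrt_mul_self [DecidableEq n] {A : Matrix n n ℝ} (hA : A.PosSemidef) :
    hA.sqrt * hA.sqrt = A := by
  have hUU : star (hA.1.eigenvectorUnitary : Matrix n n ℝ) * (hA.1.eigenvectorUnitary : Matrix n n ℝ) = 1 :=
    Unitary.coe_star_mul_self _
  have hD : diagonal ((RCLike.ofReal : ℝ → ℝ) ∘ (√·) ∘ hA.1.eigenvalues) * diagonal ((RCLike.ofReal : ℝ → ℝ) ∘ (√·) ∘ hA.1.eigenvalues)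
      = diagonal (RCLike.ofReal ∘ hA.1.eigenvalues : n → ℝ) := by
    rw [diagonal_mul_diagonal]; congr 1; funext i
    simp [Real.mul_self_sqrt (hA.eigenvalues_nonneg i)]
  unfold Matrix.PosSemidef.sqrt
  conv_rhs => rw [hA.1.spectral_theorem, Unitary.conjStarAlgAut_apply]
  calc _ = (hA.1.eigenvectorUnitary : Matrix n n ℝ) * (diagonal ((RCLike.ofReal : ℝ → ℝ) ∘ (√·) ∘ hA.1.eigenvalues) *
        (star (hA.1.eigenvectorUnitary : Matrix n n ℝ) * (hA.1.eigenvectorUnitary : Matrix n n ℝ)) *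
        diagonal ((RCLike.ofReal : ℝ → ℝ) ∘ (√·) ∘ hA.1.eigenvalues)) * star (hA.1.eigenvectorUnitary : Matrix n n ℝ) := by
          simp only [Matrix.mul_assoc]
    _ = _ := by rw [hUU, Matrix.mul_one, hD]

private lemma psd_sqrt_transpose [DecidableEq n] {A : Matrix n n ℝ} (hA : A.PosSemidef) :
    (hA.sqrt)ᵀ = hA.sqrt := by
  unfold Matrix.PosSemidef.sqrt
  simp only [star_eq_conjTranspose, conjTranspose_eq_transpose_of_trivial, transpose_mul,
    diagonal_transpose, transpose_transpose, Matrix.mul_assoc]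

private lemma quad_sandwich {α β : Type*} [Fintype α] [Fintype β] (P : Matrix α β ℝ)
    (X : Matrix β β ℝ) (x : α → ℝ) :
    x ⬝ᵥ (P * X * Pᵀ) *ᵥ x = (Pᵀ *ᵥ x) ⬝ᵥ X *ᵥ (Pᵀ *ᵥ x) := by
  rw [← mulVec_mulVec, ← mulVec_mulVec, dotProduct_mulVec x P, ← mulVec_transpose]

private lemma herm_quad [DecidableEq n] {A : Matrix n n ℝ} (hA : A.IsHermitian) (x : n → ℝ) :
    ∑ i, hA.eigenvalues i * (((hA.eigenvectorUnitary : Matrix n n ℝ))ᵀ *ᵥ x) i ^ 2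
      = x ⬝ᵥ A *ᵥ x := by
  have hstar : star (hA.eigenvectorUnitary : Matrix n n ℝ)
      = (hA.eigenvectorUnitary : Matrix n n ℝ)ᵀ := by
    rw [star_eq_conjTranspose, conjTranspose_eq_transpose_of_trivial]
  conv_rhs => rw [hA.spectral_theorem, Unitary.conjStarAlgAut_apply, hstar]
  rw [quad_sandwich]
  simp only [dotProduct, mulVec_diagonal, Function.comp_apply, RCLike.ofReal_real_eq_id, id_eq]
  exact Finset.sum_congr rfl fun i _ => by ring

private lemma counts_le {m n : Type*} [Fintype m] [Fintype n] [DecidableEq m] [DecidableEq n]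
    {A : Matrix m m ℝ} {B : Matrix n n ℝ} (hA : A.IsHermitian) (hB : B.IsHermitian)
    (φ : (m → ℝ) →ₗ[ℝ] (n → ℝ))
    (hφ : ∀ x, (φ x) ⬝ᵥ B *ᵥ (φ x) = x ⬝ᵥ A *ᵥ x) :
    (Finset.univ.filter fun j => 0 < hA.eigenvalues j).card ≤
        (Finset.univ.filter fun i => 0 < hB.eigenvalues i).card ∧
    (Finset.univ.filter fun j => hA.eigenvalues j < 0).card ≤
        (Finset.univ.filter fun i => hB.eigenvalues i < 0).card := by
  set UA := (hA.eigenvectorUnitary : Matrix m m ℝ) with hUA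
  set UB := (hB.eigenvectorUnitary : Matrix n n ℝ) with hUB
  have hUAs : star UA = UAᵀ := by
    rw [hUA, star_eq_conjTranspose, conjTranspose_eq_transpose_of_trivial]
  have hUAinv : UAᵀ * UA = 1 := by
    rw [← hUAs, hUA]
    exact Unitary.coe_star_mul_self _
  set Φ : (m → ℝ) →ₗ[ℝ] (n → ℝ) :=
    (mulVecLin UBᵀ).comp (φ.comp (mulVecLin UA)) with hΦ
  have hid : ∀ z : m → ℝ, ∑ i, hB.eigenvalues i * (Φ z i) ^ 2
      = ∑ j, hA.eigenvalues j * (z j) ^ 2 := by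
    intro z
    have h1 : ∑ i, hB.eigenvalues i * (Φ z i) ^ 2
        = (φ (UA *ᵥ z)) ⬝ᵥ B *ᵥ (φ (UA *ᵥ z)) := by
      have h := herm_quad hB (φ (UA *ᵥ z))
      rw [← h]
      apply Finset.sum_congr rfl
      intro i _
      simp [hΦ, hUB, Matrix.mulVec_transpose]
    have h2 : (UA *ᵥ z) ⬝ᵥ A *ᵥ (UA *ᵥ z) = ∑ j, hA.eigenvalues j * (z j) ^ 2 := by
      rw [← herm_quad hA]
      have hz : UAᵀ *ᵥ (UA *ᵥ z) = z := by rw [mulVec_mulVec, hUAinv, one_mulVec]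
      rw [hz]
    rw [h1, hφ, h2]
  constructor
  · exact diag_card_le _ _ Φ hid
  · have hid' : ∀ z : m → ℝ, ∑ i, (-hB.eigenvalues i) * (Φ z i) ^ 2
        = ∑ j, (-hA.eigenvalues j) * (z j) ^ 2 := by
      intro z
      simp only [neg_mul, Finset.sum_neg_distrib]
      rw [hid z]
    have h := diag_card_le (fun j => -hA.eigenvalues j) (fun i => -hB.eigenvalues i) Φ hid'
    simpa [neg_pos] using h

private lemma count_split [DecidableEq m] (f : m → ℝ) :
    (Finset.univ.filter fun i => 0 < f i).card + (Finset.univ.filter fun i => f i < 0).card +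
      (Finset.univ.filter fun i => f i = 0).card = Fintype.card m := by
  have h1 : (Finset.univ.filter fun i => f i = 0).card
      + (Finset.univ.filter fun i => ¬ f i = 0).card = Fintype.card m := by
    rw [Finset.card_filter_add_card_filter_not, Finset.card_univ]
  have h2 : (Finset.univ.filter fun i => ¬ f i = 0)
      = (Finset.univ.filter fun i => 0 < f i) ∪ (Finset.univ.filter fun i => f i < 0) := by
    ext i
    simp only [Finset.mem_filter, Finset.mem_union, Finset.mem_univ, true_and]
    constructor
    · intro h; rcases lt_or_gt_of_ne h with h' | h'
      · exact Or.inr h'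
      · exact Or.inl h'
    · rintro (h | h) <;> [exact ne_of_gt h; exact ne_of_lt h]
  have h3 : Disjoint (Finset.univ.filter fun i => 0 < f i)
      (Finset.univ.filter fun i => f i < 0) := by
    rw [Finset.disjoint_left]
    intro i hi hi'
    simp only [Finset.mem_filter] at hi hi'
    exact absurd hi'.2 (not_lt.2 hi.2.le)
  rw [h2, Finset.card_union_of_disjoint h3] at h1
  omega

end Helpers

/-- the signatures of `L = B·W·Bᵀ`, `R·W·Rᵀ` and
`L_e(F)^{1/2}·R·W·Rᵀ·L_e(F)^{1/2}` agree on positive and negative counts, and the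
zero-eigenvalue multiplicity of `L` exceeds that of `R·W·Rᵀ` by `c = dim null(Bᵀ)`. -/
theorem signature_laplacian_eq_signature_RWR
    {V F C : Type*} [Fintype V] [Fintype F] [Fintype C]
    [DecidableEq V] [DecidableEq F] [DecidableEq C] [Nonempty V]
    (BF : Matrix V F ℝ) (BC : Matrix V C ℝ)
    (hInc : IsIncidenceMatrix (Matrix.fromCols BF BC))
    (hInd : LinearIndependent ℝ (fun f : F => (fun v : V => BF v f)))
    (hSpan : ∀ c : C, (fun v : V => BC v c) ∈
      Submodule.span ℝ (Set.range (fun f : F => (fun v : V => BF v f))))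
    (w : F ⊕ C → ℝ)
    (c : ℕ)
    (hc : c = Module.finrank ℝ (LinearMap.ker (Matrix.fromCols BF BC)ᵀ.mulVecLin))
    -- `L_e(F) = B_Fᵀ·B_F` is positive definite
    (hLe : (BFᵀ * BF).PosDef)
    -- Hermitian (symmetric) structure of the three matrices in question
    (hL : (Matrix.fromCols BF BC * Matrix.diagonal w *
      (Matrix.fromCols BF BC)ᵀ).IsHermitian)
    (hRWR : ((Matrix.fromCols (1 : Matrix F F ℝ) ((BFᵀ * BF)⁻¹ * BFᵀ * BC)) * Matrix.diagonal w *
      (Matrix.fromCols (1 : Matrix F F ℝ) ((BFᵀ * BF)⁻¹ * BFᵀ * BC))ᵀ).IsHermitian)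
    (hS : (hLe.posSemidef.sqrt *
        ((Matrix.fromCols (1 : Matrix F F ℝ) ((BFᵀ * BF)⁻¹ * BFᵀ * BC)) * Matrix.diagonal w *
          (Matrix.fromCols (1 : Matrix F F ℝ) ((BFᵀ * BF)⁻¹ * BFᵀ * BC))ᵀ) *
        hLe.posSemidef.sqrt).IsHermitian) :
    (Finset.univ.filter fun i => 0 < hL.eigenvalues i).card =
        (Finset.univ.filter fun i => 0 < hRWR.eigenvalues i).card ∧
    (Finset.univ.filter fun i => 0 < hL.eigenvalues i).card =
        (Finset.univ.filter fun i => 0 < hS.eigenvalues i).card ∧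
    (Finset.univ.filter fun i => hL.eigenvalues i < 0).card =
        (Finset.univ.filter fun i => hRWR.eigenvalues i < 0).card ∧
    (Finset.univ.filter fun i => hL.eigenvalues i < 0).card =
        (Finset.univ.filter fun i => hS.eigenvalues i < 0).card ∧
    (Finset.univ.filter fun i => hL.eigenvalues i = 0).card =
        (Finset.univ.filter fun i => hRWR.eigenvalues i = 0).card + c := by


  set Bm := Matrix.fromCols BF BC with hBm
  set T : Matrix F C ℝ := (BFᵀ * BF)⁻¹ * BFᵀ * BC with hT
  set Rm : Matrix F (F ⊕ C) ℝ := Matrix.fromCols 1 T with hRm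
  set X : Matrix F F ℝ := Rm * Matrix.diagonal w * Rmᵀ with hX
  set M : Matrix F F ℝ := hLe.posSemidef.sqrt with hM
  have hdetLe : IsUnit (BFᵀ * BF).det := isUnit_iff_ne_zero.2 (ne_of_gt hLe.det_pos)
  -- BC = BF * K
  have hKex : ∃ K : Matrix F C ℝ, BF * K = BC := by
    choose k hk using fun c0 => (Submodule.mem_span_range_iff_exists_fun ℝ).1 (hSpan c0)
    refine ⟨Matrix.of (fun f c0 => k c0 f), ?_⟩
    ext v c0
    have := congrFun (hk c0) v
    simpa [Matrix.mul_apply, Finset.sum_apply, Pi.smul_apply, smul_eq_mul, mul_comm]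
      using this
  obtain ⟨K, hK⟩ := hKex
  have hTK : T = K := by
    rw [hT, ← hK, Matrix.mul_assoc ((BFᵀ * BF)⁻¹) BFᵀ (BF * K), ← Matrix.mul_assoc BFᵀ BF K,
      ← Matrix.mul_assoc, Matrix.nonsing_inv_mul _ hdetLe, Matrix.one_mul]
  have hBFT : BF * T = BC := by rw [hTK, hK]
  have hBR : Bm = BF * Rm := by
    rw [hBm, hRm, Matrix.mul_fromCols, Matrix.mul_one, hBFT]
  have hLX : Bm * Matrix.diagonal w * Bmᵀ = BF * X * BFᵀ := by
    rw [hBR, hX, Matrix.transpose_mul]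
    simp only [Matrix.mul_assoc]
  -- facts about M
  have hMM : M * M = BFᵀ * BF := psd_sqrt_mul_self hLe.posSemidef
  have hMt : Mᵀ = M := by
    exact psd_sqrt_transpose hLe.posSemidef
  have hMdet : IsUnit M.det := by
    have hdd : M.det * M.det = (BFᵀ * BF).det := by rw [← Matrix.det_mul, hMM]
    have h0 : (BFᵀ * BF).det ≠ 0 := ne_of_gt hLe.det_pos
    refine isUnit_iff_ne_zero.2 fun h => h0 ?_
    rw [← hdd, h, mul_zero]
  -- quadratic-form identities
  have hq1 : ∀ x : V → ℝ, (BFᵀ.mulVecLin x) ⬝ᵥ X *ᵥ (BFᵀ.mulVecLin x)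
      = x ⬝ᵥ (Bm * Matrix.diagonal w * Bmᵀ) *ᵥ x := by
    intro x
    simp only [mulVecLin_apply]
    rw [hLX, quad_sandwich BF X x]
  have hq2 : ∀ y : F → ℝ, ((BF * (BFᵀ * BF)⁻¹).mulVecLin y) ⬝ᵥ
      (Bm * Matrix.diagonal w * Bmᵀ) *ᵥ ((BF * (BFᵀ * BF)⁻¹).mulVecLin y) = y ⬝ᵥ X *ᵥ y := by
    intro y
    simp only [mulVecLin_apply]
    rw [hLX, quad_sandwich BF X ((BF * (BFᵀ * BF)⁻¹) *ᵥ y)]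
    have hy : BFᵀ *ᵥ ((BF * (BFᵀ * BF)⁻¹) *ᵥ y) = y := by
      rw [mulVec_mulVec, ← Matrix.mul_assoc, Matrix.mul_nonsing_inv _ hdetLe, one_mulVec]
    rw [hy]
  have hSM : M * X * M = M * X * Mᵀ := by rw [hMt]
  have hq3 : ∀ x : F → ℝ, (Mᵀ.mulVecLin x) ⬝ᵥ X *ᵥ (Mᵀ.mulVecLin x)
      = x ⬝ᵥ (M * X * M) *ᵥ x := by
    intro x
    simp only [mulVecLin_apply]
    rw [hSM, quad_sandwich M X x]
  have hq4 : ∀ y : F → ℝ, ((M⁻¹).mulVecLin y) ⬝ᵥ (M * X * M) *ᵥ ((M⁻¹).mulVecLin y)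
      = y ⬝ᵥ X *ᵥ y := by
    intro y
    simp only [mulVecLin_apply]
    rw [hSM, quad_sandwich M X (M⁻¹ *ᵥ y)]
    have hy : Mᵀ *ᵥ (M⁻¹ *ᵥ y) = y := by
      rw [mulVec_mulVec, hMt, Matrix.mul_nonsing_inv _ hMdet, one_mulVec]
    rw [hy]
  obtain ⟨p1, n1⟩ := counts_le hL hRWR BFᵀ.mulVecLin hq1
  obtain ⟨p2, n2⟩ := counts_le hRWR hL (BF * (BFᵀ * BF)⁻¹).mulVecLin hq2
  obtain ⟨p3, n3⟩ := counts_le hS hRWR Mᵀ.mulVecLin hq3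
  obtain ⟨p4, n4⟩ := counts_le hRWR hS (M⁻¹).mulVecLin hq4
  have e1 := le_antisymm p1 p2
  have e2 := le_antisymm n1 n2
  have e3 := le_antisymm p3 p4
  have e4 := le_antisymm n3 n4
  -- dimension count
  have hrank : BF.rank = Fintype.card F := by
    rw [Matrix.rank_eq_finrank_span_cols]
    exact finrank_span_eq_card hInd
  have hkerEq : LinearMap.ker Bmᵀ.mulVecLin = LinearMap.ker BFᵀ.mulVecLin := by
    ext x
    simp only [LinearMap.mem_ker, mulVecLin_apply]
    have hmv : Bmᵀ *ᵥ x = Sum.elim (BFᵀ *ᵥ x) (BCᵀ *ᵥ x) := by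
      rw [hBm, Matrix.transpose_fromCols, Matrix.fromRows_mulVec]
    rw [hmv]
    constructor
    · intro h
      funext f
      exact congrFun h (Sum.inl f)
    · intro h
      have hBC0 : BCᵀ *ᵥ x = 0 := by
        rw [← hK, Matrix.transpose_mul, ← mulVec_mulVec, h, mulVec_zero]
      rw [h, hBC0]
      funext i
      cases i <;> rfl
  have hcV : c + Fintype.card F = Fintype.card V := by
    have hrn := LinearMap.finrank_range_add_finrank_ker (BFᵀ.mulVecLin)
    have h1 : Module.finrank ℝ (LinearMap.range BFᵀ.mulVecLin) = BFᵀ.rank := rfl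
    have h2 : BFᵀ.rank = Fintype.card F := by rw [Matrix.rank_transpose, hrank]
    rw [hc, hkerEq]
    rw [h1, h2, Module.finrank_fintype_fun_eq_card] at hrn
    omega
  have sL := count_split hL.eigenvalues
  have sX := count_split hRWR.eigenvalues
  refine ⟨e1, ?_, e2, ?_, ?_⟩
  · rw [e1, e3]
  · rw [e2, e4]
  · omega
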